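/- Dwass's identity: let (X_i) be i.i.d. nonnegative integer-valued random variables, S_n = X_1 + ... + X_n, and T_k = inf{n ≥ 0 : S_n = n − k}. Then the process (T_k)_{k≥0} has independent and identically distributed increments; that is, T_k − T_{k−1}, k ≥ 1, are i.i.d., each distributed as T_1. -/

import Mathlib

set_option linter.unusedSectionVars false

open MeasureTheory ProbabilityTheory Filter
open scoped ENNReal


def dwS (f : ℕ → ℕ) (m : ℕ) : ℤ := ∑ i ∈ Finset.range m, (f i : ℤ)

def dwBlk (f : ℕ → ℕ) (a n : ℕ) : Prop :=
  (∀ m < n, (m:ℤ) ≤ ∑ i ∈ Finset.range m, (f (a+i) : ℤ)) ∧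
  (∑ i ∈ Finset.range n, (f (a+i) : ℤ)) = (n:ℤ) - 1

noncomputable def dwT (f : ℕ → ℕ) (k : ℕ) : ℕ∞ :=
  sInf ((fun m : ℕ => (m:ℕ∞)) '' {m : ℕ | dwS f m = (m:ℤ) - (k:ℤ)})

lemma dwS_add (f : ℕ → ℕ) (a r : ℕ) :
    dwS f (a + r) = dwS f a + ∑ i ∈ Finset.range r, (f (a + i) : ℤ) := by
  induction r with
  | zero => simp
  | succ r ih =>
    rw [← Nat.add_assoc]
    show dwS f ((a+r) + 1) = _
    rw [dwS, Finset.sum_range_succ, ← dwS, ih, Finset.sum_range_succ]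
    ring

lemma sInf_image_coe (M : Set ℕ) (h : M.Nonempty) :
    sInf ((fun m : ℕ => (m:ℕ∞)) '' M) = ((sInf M : ℕ) : ℕ∞) := by
  apply le_antisymm
  · exact sInf_le ⟨sInf M, Nat.sInf_mem h, rfl⟩
  · refine le_sInf ?_
    rintro x ⟨m, hm, rfl⟩
    simp only []
    exact_mod_cast Nat.sInf_le hm

lemma dwT_eq_iff (f : ℕ → ℕ) (k N : ℕ) :
    dwT f k = (N : ℕ∞) ↔
      (dwS f N = (N:ℤ) - k ∧ ∀ m < N, dwS f m ≠ (m:ℤ) - k) := by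
  unfold dwT
  set M : Set ℕ := {m : ℕ | dwS f m = (m:ℤ) - (k:ℤ)} with hM
  constructor
  · intro h
    rcases M.eq_empty_or_nonempty with he | hne
    · rw [he] at h
      simp at h
    · rw [sInf_image_coe M hne] at h
      have hN : sInf M = N := by exact_mod_cast h
      refine ⟨by have := Nat.sInf_mem hne; rwa [hN] at this, fun m hm => ?_⟩
      have := Nat.notMem_of_lt_sInf (by rwa [hN] : m < sInf M)
      simpa [hM] using this
  · rintro ⟨h1, h2⟩
    have hne : M.Nonempty := ⟨N, h1⟩
    rw [sInf_image_coe M hne]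
    have : sInf M = N := by
      apply le_antisymm (Nat.sInf_le h1)
      by_contra hlt
      exact h2 _ (by omega : sInf M < N) (Nat.sInf_mem hne)
    rw [this]

lemma dwT_zero (f : ℕ → ℕ) : dwT f 0 = 0 := by
  have : dwT f 0 = ((0:ℕ) : ℕ∞) := by
    rw [dwT_eq_iff]
    exact ⟨by simp [dwS], by omega⟩
  simpa using this

lemma dwBlk_congr {f g : ℕ → ℕ} {a b n : ℕ} (h : ∀ i < n, f (a+i) = g (b+i)) :
    dwBlk f a n ↔ dwBlk g b n := by
  have hs : ∀ m ≤ n, ∑ i ∈ Finset.range m, (f (a+i):ℤ) = ∑ i ∈ Finset.range m, (g (b+i):ℤ) := by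
    intro m hm
    refine Finset.sum_congr rfl fun i hi => ?_
    rw [h i (lt_of_lt_of_le (Finset.mem_range.mp hi) hm)]
  unfold dwBlk
  constructor <;> rintro ⟨h1, h2⟩ <;> refine ⟨fun m hm => ?_, ?_⟩
  · rw [← hs m hm.le]; exact h1 m hm
  · rw [← hs n le_rfl]; exact h2
  · rw [hs m hm.le]; exact h1 m hm
  · rw [hs n le_rfl]; exact h2

lemma dwass_path (f : ℕ → ℕ) (K : ℕ) (n : ℕ → ℕ) :
    (∀ j < K, dwT f (j+1) = dwT f j + (n j : ℕ∞)) ↔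
      (∀ j < K, dwBlk f (∑ i ∈ Finset.range j, n i) (n j)) := by
  set N : ℕ → ℕ := fun j => ∑ i ∈ Finset.range j, n i with hN
  have hNsucc : ∀ j, N (j+1) = N j + n j := fun j => Finset.sum_range_succ _ _
  constructor
  · intro ha
    -- first: dwT f j = N j for all j ≤ K
    have hTj : ∀ j ≤ K, dwT f j = ((N j : ℕ) : ℕ∞) := by
      intro j hj
      induction j with
      | zero => simpa [hN] using dwT_zero f
      | succ j ih =>
        have h1 := ha j hj
        rw [ih (by omega)] at h1
        rw [h1, hNsucc j]
        push_cast
        ring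
    intro j hj
    -- extract hitting info
    have hj1 := (dwT_eq_iff f j (N j)).mp (hTj j hj.le)
    have hj2 := (dwT_eq_iff f (j+1) (N (j+1))).mp (hTj (j+1) hj)
    -- partial sums bound: ∀ r < n j, dwS f (N j + r) ≥ N j + r - j
    have hpart : ∀ r < n j, (N j : ℤ) + r - j ≤ dwS f (N j + r) := by
      intro r hr
      induction r with
      | zero => simpa using hj1.1.ge
      | succ r ih =>
        have hr' : r < n j := by omega
        have ihle := ih hr'
        have hmono : dwS f (N j + r) ≤ dwS f (N j + (r+1)) := by
          have he : N j + (r+1) = (N j + r) + 1 := by omega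
          rw [he]
          simp only [dwS]
          rw [Finset.sum_range_succ]
          have h0 : (0:ℤ) ≤ (f (N j + r) : ℤ) := by positivity
          omega
        have hne : dwS f (N j + (r+1)) ≠ ((N j + (r+1) : ℕ) : ℤ) - ((j:ℤ)+1) := by
          have := hj2.2 (N j + (r+1)) (by rw [hNsucc j]; omega)
          push_cast at this ⊢
          convert this using 2
        push_cast at ihle hmono hne ⊢
        omega
    show dwBlk f (N j) (n j)
    constructor
    · intro m hm
      have h := hpart m hm
      have hsplit := dwS_add f (N j) m
      have h1 := hj1.1
      omega
    · have hsplit := dwS_add f (N j) (n j)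
      have h2 : dwS f (N j + n j) = ((N j + n j : ℕ) : ℤ) - (j+1) := by
        rw [← hNsucc j]; exact_mod_cast hj2.1
      push_cast at h2
      have h1 := hj1.1
      omega
  · intro hb
    have hb' : ∀ j < K, dwBlk f (N j) (n j) := hb
    -- invariant by induction
    have main : ∀ j ≤ K, dwS f (N j) = (N j : ℤ) - j ∧
        ∀ m < N j, ((m:ℤ) - j < dwS f m) := by
      intro j hj
      induction j with
      | zero => exact ⟨by simp [hN, dwS], fun m hm => absurd hm (by simp [hN])⟩
      | succ j ih =>
        obtain ⟨ih1, ih2⟩ := ih (by omega)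
        obtain ⟨hb1, hb2⟩ := hb' j hj
        constructor
        · rw [hNsucc j, dwS_add f (N j) (n j), ih1, hb2]
          push_cast; ring
        · intro m hm
          rcases lt_or_ge m (N j) with h | h
          · have := ih2 m h
            omega
          · obtain ⟨r, rfl⟩ := Nat.exists_eq_add_of_le h
            have hr : r < n j := by
              rw [hNsucc j] at hm; omega
            have hU : (r:ℤ) ≤ ∑ i ∈ Finset.range r, (f (N j + i) : ℤ) := by
              rcases Nat.eq_zero_or_pos r with h0 | h0
              · simp [h0]
              · exact hb1 r hr
            have hsplit := dwS_add f (N j) r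
            push_cast
            omega
    have hTj : ∀ j ≤ K, dwT f j = ((N j : ℕ) : ℕ∞) := by
      intro j hj
      rw [dwT_eq_iff]
      obtain ⟨h1, h2⟩ := main j hj
      exact ⟨h1, fun m hm => ne_of_gt (h2 m hm)⟩
    intro j hj
    rw [hTj j hj.le, hTj (j+1) hj, hNsucc j]
    push_cast
    ring

lemma dwass_path_one (f : ℕ → ℕ) (m : ℕ) :
    dwT f 1 = (m : ℕ∞) ↔ dwBlk f 0 m := by
  have h := dwass_path f 1 (fun _ => m)
  simp only [Nat.lt_one_iff, forall_eq] at h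
  rw [dwT_zero, zero_add] at h
  simpa using h

lemma dwAllMeasurable {ι : Type*} [Finite ι] (s : Set (ι → ℕ)) : MeasurableSet s := by
  have hsing : ∀ x : ι → ℕ, MeasurableSet ({x} : Set (ι → ℕ)) := by
    intro x
    have : ({x} : Set (ι → ℕ)) = ⋂ i, (fun y : ι → ℕ => y i) ⁻¹' {x i} := by
      ext y; simp [funext_iff, eq_comm]
    rw [this]
    exact MeasurableSet.iInter fun i => (measurable_pi_apply i) (measurableSet_singleton _)
  rw [← Set.biUnion_of_singleton s]
  exact MeasurableSet.biUnion s.to_countable (fun x _ => hsing x)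

section Measure

variable {Ω : Type*} [MeasurableSpace Ω] (P : Measure Ω) [IsProbabilityMeasure P]
    (μ : Measure ℕ) [IsProbabilityMeasure μ]
    (X : ℕ → Ω → ℕ) (hmeas : ∀ i, Measurable (X i))
    (hindep : iIndepFun X P)
    (hlaw : ∀ i, P.map (X i) = μ)

include hmeas in
lemma dwBlkSet_measurable (a nn : ℕ) :
    MeasurableSet {ω | dwBlk (fun i => X i ω) a nn} := by
  have hsum : ∀ m, Measurable (fun ω => ∑ i ∈ Finset.range m, (X (a+i) ω : ℤ)) := by
    intro m
    exact Finset.measurable_sum _ fun i _ =>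
      (measurable_from_top (f := (Nat.cast : ℕ → ℤ))).comp (hmeas (a+i))
  have heq : {ω | dwBlk (fun i => X i ω) a nn} =
      (⋂ m ∈ Finset.range nn,
        {ω | (m:ℤ) ≤ ∑ i ∈ Finset.range m, (X (a+i) ω : ℤ)}) ∩
      ((fun ω => ∑ i ∈ Finset.range nn, (X (a+i) ω : ℤ)) ⁻¹' {(nn:ℤ) - 1}) := by
    ext ω
    simp [dwBlk, Set.mem_iInter]
  rw [heq]
  refine MeasurableSet.inter ?_ ((hsum nn) (measurableSet_singleton _))
  refine MeasurableSet.biInter (Finset.range nn).countable_toSet fun m _ => ?_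
  exact measurableSet_le measurable_const (hsum m)

include hindep hmeas hlaw in
lemma dwCyl_prob (a nn : ℕ) (xb : ℕ → ℕ) :
    P (⋂ i ∈ Finset.range nn, X (a+i) ⁻¹' {xb i}) = ∏ i ∈ Finset.range nn, μ {xb i} := by
  classical
  have key := (iIndepFun_iff_measure_inter_preimage_eq_mul.mp hindep)
    ((Finset.range nn).image (a + ·)) (sets := fun i => {xb (i - a)})
    (fun i _ => measurableSet_singleton _)
  have h1 : (⋂ i ∈ (Finset.range nn).image (a + ·), X i ⁻¹' {xb (i - a)}) =
      ⋂ i ∈ Finset.range nn, X (a+i) ⁻¹' {xb i} := by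
    ext ω
    simp only [Set.mem_iInter, Finset.mem_image, Finset.mem_range, Set.mem_preimage,
      Set.mem_singleton_iff]
    constructor
    · intro h i hi
      have := h (a+i) ⟨i, hi, rfl⟩
      rwa [Nat.add_sub_cancel_left] at this
    · rintro h i ⟨r, hr, rfl⟩
      rw [Nat.add_sub_cancel_left]
      exact h r hr
  have h2 : ∏ i ∈ (Finset.range nn).image (a + ·), P (X i ⁻¹' {xb (i - a)}) =
      ∏ i ∈ Finset.range nn, P (X (a+i) ⁻¹' {xb i}) := by
    rw [Finset.prod_image (by intro x _ y _ h; dsimp only at h; omega)]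
    exact Finset.prod_congr rfl fun i _ => by rw [Nat.add_sub_cancel_left]
  rw [h1, h2] at key
  rw [key]
  refine Finset.prod_congr rfl fun i _ => ?_
  rw [← hlaw (a+i), Measure.map_apply (hmeas _) (measurableSet_singleton _)]

def dwXb (nn : ℕ) (x : Fin nn → ℕ) : ℕ → ℕ := fun i => if h : i < nn then x ⟨i, h⟩ else 0

include hmeas hindep hlaw in
lemma dwBlk_prob (a nn : ℕ) :
    P {ω | dwBlk (fun i => X i ω) a nn} =
      ∑' x : {x : Fin nn → ℕ // dwBlk (dwXb nn x) 0 nn},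
        ∏ i ∈ Finset.range nn, μ {dwXb nn x.1 i} := by
  classical
  have hdecomp : {ω | dwBlk (fun i => X i ω) a nn} =
      ⋃ x : {x : Fin nn → ℕ // dwBlk (dwXb nn x) 0 nn},
        ⋂ i ∈ Finset.range nn, X (a+i) ⁻¹' {dwXb nn x.1 i} := by
    ext ω
    simp only [Set.mem_iUnion, Set.mem_setOf_eq, Set.mem_iInter, Set.mem_preimage,
      Set.mem_singleton_iff, Finset.mem_range]
    constructor
    · intro h
      refine ⟨⟨fun i => X (a + i) ω, ?_⟩, fun i hi => ?_⟩
      · refine (dwBlk_congr (f := fun i => X i ω) (a := a) (b := 0) ?_).mp h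
        intro i hi
        simp [dwXb, hi]
      · simp [dwXb, hi]
    · rintro ⟨⟨x, hx⟩, h⟩
      refine (dwBlk_congr (f := dwXb nn x) (a := 0) (b := a) ?_).mp hx
      intro i hi
      simp only [Nat.zero_add]
      exact (h i hi).symm
  rw [hdecomp, measure_iUnion]
  · refine tsum_congr fun x => ?_
    exact dwCyl_prob P μ X hmeas hindep hlaw a nn (dwXb nn x.1)
  · rintro ⟨x, hx⟩ ⟨y, hy⟩ hxy
    simp only [ne_eq, Subtype.mk.injEq] at hxy
    rw [Function.onFun]
    rw [Set.disjoint_left]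
    intro ω hωx hωy
    apply hxy
    have hxyeq : ∀ i : Fin nn, x i = y i := by
      intro i
      have h1 := Set.mem_iInter₂.mp hωx i (Finset.mem_range.mpr i.isLt)
      have h2 := Set.mem_iInter₂.mp hωy i (Finset.mem_range.mpr i.isLt)
      simp only [Set.mem_preimage, Set.mem_singleton_iff] at h1 h2
      have e1 : dwXb nn x (i : ℕ) = x i := by simp [dwXb, i.isLt]
      have e2 : dwXb nn y (i : ℕ) = y i := by simp [dwXb, i.isLt]
      rw [← e1, ← e2, ← h1, ← h2]
    exact funext hxyeq
  · intro x
    exact MeasurableSet.biInter (Finset.range nn).countable_toSet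
      fun i _ => (hmeas _) (measurableSet_singleton _)

include hmeas hindep hlaw in
lemma dwBlk_prob_eq (a nn : ℕ) :
    P {ω | dwBlk (fun i => X i ω) a nn} = P {ω | dwBlk (fun i => X i ω) 0 nn} := by
  rw [dwBlk_prob P μ X hmeas hindep hlaw a nn, dwBlk_prob P μ X hmeas hindep hlaw 0 nn]


include hmeas hindep hlaw in
lemma dwBlk_inter_prod (n : ℕ → ℕ) (K : ℕ) :
    P (⋂ j ∈ Finset.range K,
        {ω | dwBlk (fun i => X i ω) (∑ i ∈ Finset.range j, n i) (n j)})
      = ∏ j ∈ Finset.range K,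
          P {ω | dwBlk (fun i => X i ω) (∑ i ∈ Finset.range j, n i) (n j)} := by
  classical
  induction K with
  | zero => simp
  | succ K ih =>
    set N : ℕ → ℕ := fun j => ∑ i ∈ Finset.range j, n i with hN
    have hNsucc : ∀ j, N (j+1) = N j + n j := fun j => Finset.sum_range_succ _ _
    have hNmono : ∀ j < K, N j + n j ≤ N K := by
      intro j hj
      have : N (j+1) ≤ N K := by
        apply Finset.sum_le_sum_of_subset
        exact Finset.range_subset_range.mpr (by omega)
      rw [hNsucc j] at this
      exact this
    set S : Finset ℕ := Finset.range (N K) with hS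
    set Tt : Finset ℕ := Finset.Ico (N K) (N K + n K) with hT
    have hdisj : Disjoint S Tt := by
      rw [Finset.disjoint_left]
      intro i hi hi2
      rw [hS, Finset.mem_range] at hi
      rw [hT, Finset.mem_Ico] at hi2
      omega
    have hIF := hindep.indepFun_finset S Tt hdisj hmeas
    set A1 : Set ({x // x ∈ S} → ℕ) :=
      {y | ∀ j ∈ Finset.range K,
        dwBlk (fun i => if h : i ∈ S then y ⟨i, h⟩ else 0) (N j) (n j)} with hA1
    set A2 : Set ({x // x ∈ Tt} → ℕ) :=
      {y | dwBlk (fun i => if h : i ∈ Tt then y ⟨i, h⟩ else 0) (N K) (n K)} with hA2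
    have e1 : (⋂ j ∈ Finset.range K, {ω | dwBlk (fun i => X i ω) (N j) (n j)}) =
        (fun ω (i : {x // x ∈ S}) => X i.1 ω) ⁻¹' A1 := by
      ext ω
      simp only [Set.mem_iInter, Set.mem_setOf_eq, Set.mem_preimage, hA1]
      refine forall₂_congr fun j hj => ?_
      rw [Finset.mem_range] at hj
      apply dwBlk_congr
      intro i hi
      rw [dif_pos (by rw [hS, Finset.mem_range]; have := hNmono j hj; omega :
        N j + i ∈ S)]
    have e2 : {ω | dwBlk (fun i => X i ω) (N K) (n K)} =
        (fun ω (i : {x // x ∈ Tt}) => X i.1 ω) ⁻¹' A2 := by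
      ext ω
      simp only [Set.mem_setOf_eq, Set.mem_preimage, hA2]
      apply dwBlk_congr
      intro i hi
      rw [dif_pos (by rw [hT, Finset.mem_Ico]; omega : N K + i ∈ Tt)]
    have key := (indepFun_iff_measure_inter_preimage_eq_mul.mp hIF) A1 A2
      (dwAllMeasurable A1) (dwAllMeasurable A2)
    rw [Finset.range_add_one, Finset.set_biInter_insert, Set.inter_comm,
      Finset.prod_insert (Finset.notMem_range_self), e1, e2, key, ← e1, ← e2, ih]
    ring


end Measure

/-- **Dwass's identity.** Let `(X i)` be i.i.d. nonnegative integer-valued random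
variables, `S n = X 1 + ... + X n`, and `T k = inf {n ≥ 0 : S n = n - k}` (with value `∞` if no
such `n` exists).  Then the process `(T k)` has i.i.d. increments, each distributed as `T 1`:
for every `K` and finite values `t : Fin K → ℕ`,
`P(∀ j < K, T (j+1) = T j + t j) = ∏ j, P(T 1 = t j)`. -/
theorem dwass_iid_increments
    {Ω : Type*} [MeasurableSpace Ω] (P : Measure Ω) [IsProbabilityMeasure P]
    (μ : Measure ℕ) [IsProbabilityMeasure μ]
    (X : ℕ → Ω → ℕ) (hmeas : ∀ i, Measurable (X i))
    (hindep : iIndepFun X P)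
    (hlaw : ∀ i, P.map (X i) = μ)
    (T : ℕ → Ω → ℕ∞)
    (hT : ∀ k ω, T k ω =
      sInf ((fun m : ℕ => (m : ℕ∞)) ''
        {m : ℕ | ((∑ i ∈ Finset.range m, X i ω : ℕ) : ℤ) = (m : ℤ) - (k : ℤ)})) :
    ∀ (K : ℕ) (t : Fin K → ℕ),
      P {ω | ∀ j : Fin K, T ((j : ℕ) + 1) ω = T (j : ℕ) ω + (t j : ℕ∞)}
        = ∏ j : Fin K, P {ω | T 1 ω = (t j : ℕ∞)}:= by
  classical
  have hTf : ∀ k ω, T k ω = dwT (fun i => X i ω) k := by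
    intro k ω
    have hset : {m : ℕ | ((∑ i ∈ Finset.range m, X i ω : ℕ) : ℤ) = (m : ℤ) - (k : ℤ)} =
        {m : ℕ | dwS (fun i => X i ω) m = (m : ℤ) - (k : ℤ)} := by
      ext m
      simp only [Set.mem_setOf_eq, dwS]
      push_cast
      rfl
    rw [hT k ω, hset]
    rfl
  intro K t
  set n : ℕ → ℕ := fun i => if h : i < K then t ⟨i, h⟩ else 0 with hn
  have hfin : ∀ j : Fin K, n (j : ℕ) = t j := by
    intro j
    simp [hn, j.isLt]
  have hsetE : {ω | ∀ j : Fin K, T ((j : ℕ) + 1) ω = T (j : ℕ) ω + (t j : ℕ∞)} =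
      ⋂ j ∈ Finset.range K,
        {ω | dwBlk (fun i => X i ω) (∑ i ∈ Finset.range j, n i) (n j)} := by
    ext ω
    simp only [Set.mem_setOf_eq, Set.mem_iInter, Finset.mem_range]
    rw [← dwass_path (fun i => X i ω) K n]
    constructor
    · intro h j hj
      have h2 := h ⟨j, hj⟩
      rw [hTf, hTf] at h2
      rw [show n j = t ⟨j, hj⟩ from by simp [hn, hj]]
      exact h2
    · intro h j
      have h2 := h (j : ℕ) j.isLt
      rw [hTf, hTf, ← hfin j]
      exact h2
  have hone : ∀ a m : ℕ, P {ω | dwBlk (fun i => X i ω) a m} = P {ω | T 1 ω = (m : ℕ∞)} := by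
    intro a m
    rw [dwBlk_prob_eq P μ X hmeas hindep hlaw a m]
    congr 1
    ext ω
    simp only [Set.mem_setOf_eq]
    rw [hTf 1 ω, dwass_path_one]
  rw [hsetE, dwBlk_inter_prod P μ X hmeas hindep hlaw n K]
  rw [Finset.prod_congr rfl fun j (_ : j ∈ Finset.range K) =>
    hone (∑ i ∈ Finset.range j, n i) (n j)]
  rw [← Fin.prod_univ_eq_prod_range (fun j => P {ω | T 1 ω = ((n j : ℕ) : ℕ∞)}) K]
  exact Finset.prod_congr rfl fun j _ => by rw [hfin j]
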